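/- Let G be a finite simple graph on a vertex set V with n = |V| ≥ 2, let v₀ ∈ V with r = deg_G v₀ ≥ 1, let G' be the induced subgraph of G on V ∖ {v₀}, and let α : V → V → ℝ be antisymmetric. For the magnetic combinatorial Laplacians of (G, α) (with n eigenvalues λ_1 ≤ … ≤ λ_n) and (G', α restricted) (with n−1 eigenvalues λ'_1 ≤ … ≤ λ'_{n−1}): λ_k ≤ λ'_{k + r − 1} for all 1 ≤ k ≤ n − r, and λ'_k ≤ λ_{k+1} for all 1 ≤ k ≤ n − 1. -/

import Mathlib

/-- The magnetic weighted Laplacian `Δ(w,m,α)` as a matrix acting on `ℂ^V`: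
`(Δφ)(v) = (1/m v) · Σ_u w v u · (φ(v) − exp(i·α v u)·φ(u))`. -/
noncomputable def magLap {V : Type} [Fintype V] [DecidableEq V]
    (w : V → V → ℝ) (m : V → ℝ) (α : V → V → ℝ) : Matrix V V ℂ :=
  fun v u => (if v = u then (((∑ u', w v u') / m v : ℝ) : ℂ) else 0)
    - ((w v u / m v : ℝ) : ℂ) * Complex.exp (Complex.I * (α v u : ℝ))

open scoped Classical

/-- The magnetic combinatorial Laplacian of a simple graph: vertex weight `1`,
edge weight the adjacency indicator. -/
noncomputable def combLap {V : Type} [Fintype V] [DecidableEq V]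
    (G : SimpleGraph V) (α : V → V → ℝ) : Matrix V V ℂ :=
  magLap (fun v u => if G.Adj v u then 1 else 0) (fun _ => 1) α

/-- The eigenvalues (with multiplicity, nondecreasing) of a matrix with real
spectrum: real parts of the roots of the characteristic polynomial, sorted;
`lamk A k` is the `(k+1)`-st smallest (0-based index). -/
noncomputable def lamk {V : Type} [Fintype V] [DecidableEq V] (A : Matrix V V ℂ) (k : ℕ) : ℝ :=
  ((A.charpoly.roots.map Complex.re).sort (· ≤ ·)).getD k 0


open Matrix Polynomial Complex Finset


namespace S16

variable {V : Type} [Fintype V] [DecidableEq V]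

noncomputable def mu {A : Matrix V V ℂ} (hA : A.IsHermitian) : Fin (Fintype.card V) → ℝ :=
  (hA.eigenvalues ∘ (Fintype.equivFin V).symm) ∘ Tuple.sort (hA.eigenvalues ∘ (Fintype.equivFin V).symm)

lemma mu_mono {A : Matrix V V ℂ} (hA : A.IsHermitian) : Monotone (mu hA) :=
  Tuple.monotone_sort _

lemma charpoly_herm {A : Matrix V V ℂ} (hA : A.IsHermitian) :
    A.charpoly = ∏ i : V, (X - C (hA.eigenvalues i : ℂ)) := by
  classical
  set U : Matrix V V ℂ := (hA.eigenvectorUnitary : Matrix V V ℂ)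
  have hU : U * star U = 1 := (Matrix.mem_unitaryGroup_iff).mp hA.eigenvectorUnitary.2
  set D : Matrix V V ℂ := Matrix.diagonal (RCLike.ofReal ∘ hA.eigenvalues)
  have hspec : A = U * D * star U := hA.spectral_theorem
  have hmul : ∀ M N : Matrix V V ℂ, (M * N).map (C : ℂ →+* ℂ[X]) = M.map C * N.map C := by
    intro M N; exact Matrix.map_mul
  have hcm : charmatrix A = (U.map C) * charmatrix D * ((star U).map C) := by
    have h1 : charmatrix A = Matrix.scalar V (X : ℂ[X]) - A.map C := rfl
    have hsc : (U.map (C : ℂ →+* ℂ[X])) * Matrix.scalar V (X : ℂ[X]) = Matrix.scalar V (X : ℂ[X]) * (U.map C) := by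
      apply (Matrix.scalar_commute (X : ℂ[X]) ?_ _).symm
      intro p; exact Commute.all _ _
    have h2 : charmatrix D = Matrix.scalar V (X : ℂ[X]) - D.map C := rfl
    rw [h1, hspec, h2, Matrix.mul_sub, Matrix.sub_mul, hsc, mul_assoc ((Matrix.scalar V) (X : ℂ[X])), ← hmul U (star U), hU, ← hmul, ← hmul]
    simp [mul_assoc]
  have hdetU : (U.map (C : ℂ →+* ℂ[X])).det * ((star U).map (C : ℂ →+* ℂ[X])).det = 1 := by
    rw [← Matrix.det_mul, ← Matrix.map_mul, hU]
    simp
  have hD : charmatrix D = Matrix.diagonal (fun i => (X : ℂ[X]) - C ((hA.eigenvalues i : ℂ))) := by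
    refine Matrix.ext fun i j => ?_
    by_cases h : i = j
    · subst h; simp [charmatrix_apply_eq, D, Matrix.diagonal_apply_eq]
    · rw [charmatrix_apply_ne _ _ _ h, Matrix.diagonal_apply_ne _ h]
      simp [D, Matrix.diagonal_apply_ne _ h]
  have : A.charpoly = (charmatrix A).det := rfl
  rw [this, hcm, Matrix.det_mul, Matrix.det_mul, hD, Matrix.det_diagonal,
    mul_right_comm, hdetU, one_mul]

lemma roots_charpoly {A : Matrix V V ℂ} (hA : A.IsHermitian) :
    A.charpoly.roots.map Complex.re = Finset.univ.val.map hA.eigenvalues := by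
  rw [charpoly_herm hA]
  have : (∏ i : V, (X - C (hA.eigenvalues i : ℂ)))
      = ((Finset.univ.val.map (fun i => (hA.eigenvalues i : ℂ))).map (fun a => X - C a)).prod := by
    rw [Multiset.map_map]; rfl
  rw [this, Polynomial.roots_multiset_prod_X_sub_C, Multiset.map_map]
  rfl

lemma multiset_eig {A : Matrix V V ℂ} (hA : A.IsHermitian) :
    Finset.univ.val.map hA.eigenvalues = ↑(List.ofFn (mu hA)) := by
  classical
  set e := (Fintype.equivFin V).symm
  set f := hA.eigenvalues ∘ e with hf
  set σ := Tuple.sort f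
  have h1 : (Finset.univ : Finset V) = Finset.univ.map e.toEmbedding := (Finset.map_univ_equiv e).symm
  have h2 : (Finset.univ : Finset (Fin (Fintype.card V)))
      = Finset.univ.map (σ : Equiv.Perm (Fin (Fintype.card V))).toEmbedding :=
    (Finset.map_univ_equiv _).symm
  calc Finset.univ.val.map hA.eigenvalues
      = (Finset.univ.map e.toEmbedding).val.map hA.eigenvalues := by rw [← h1]
    _ = Finset.univ.val.map f := by
        rw [Finset.map_val, Multiset.map_map]; rfl
    _ = (Finset.univ.map (σ : Equiv.Perm (Fin (Fintype.card V))).toEmbedding).val.map f := by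
        rw [← h2]
    _ = Finset.univ.val.map (mu hA) := by
        rw [Finset.map_val, Multiset.map_map]; rfl
    _ = ↑(List.ofFn (mu hA)) := by
        rw [Fin.univ_def]
        change Multiset.map (mu hA) ↑(List.finRange (Fintype.card V)) = _
        rw [Multiset.map_coe, ← List.ofFn_eq_map]

lemma lamk_eq {A : Matrix V V ℂ} (hA : A.IsHermitian) (k : ℕ) (hk : k < Fintype.card V) :
    lamk A k = mu hA ⟨k, hk⟩ := by
  have hsort : (A.charpoly.roots.map Complex.re).sort (· ≤ ·) = List.ofFn (mu hA) := by
    refine List.Perm.eq_of_pairwise' (Multiset.pairwise_sort _ _) ((mu_mono hA).sortedLE_ofFn.pairwise) ?_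
    rw [← Multiset.coe_eq_coe, Multiset.sort_eq, roots_charpoly hA, multiset_eig hA]
  have hlen : k < (List.ofFn (mu hA)).length := by simpa using hk
  rw [lamk, hsort, List.getD_eq_getElem _ _ hlen, List.getElem_ofFn]

noncomputable def qf (A : Matrix V V ℂ) (x : V → ℂ) : ℝ :=
  (dotProduct (star x) (A *ᵥ x)).re

noncomputable def nsq (x : V → ℂ) : ℝ := ∑ v, Complex.normSq (x v)

lemma nsq_nonneg (x : V → ℂ) : 0 ≤ nsq x :=
  Finset.sum_nonneg fun _ _ => Complex.normSq_nonneg _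

lemma nsq_pos {x : V → ℂ} (hx : x ≠ 0) : 0 < nsq x := by
  obtain ⟨v, hv⟩ := Function.ne_iff.mp hx
  have h : 0 < Complex.normSq (x v) := by
    simpa [Complex.normSq_pos] using hv
  exact lt_of_lt_of_le h
    (Finset.single_le_sum (fun i _ => Complex.normSq_nonneg _) (Finset.mem_univ v))

lemma star_dot_self (x : V → ℂ) : dotProduct (star x) x = (nsq x : ℂ) := by
  simp only [dotProduct, Pi.star_apply, nsq, Complex.ofReal_sum]
  refine Finset.sum_congr rfl fun v _ => ?_
  rw [Complex.normSq_eq_conj_mul_self, RCLike.star_def]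

noncomputable def idx {A : Matrix V V ℂ} (hA : A.IsHermitian) :
    Fin (Fintype.card V) → V := fun i =>
  (Fintype.equivFin V).symm (Tuple.sort (hA.eigenvalues ∘ (Fintype.equivFin V).symm) i)

lemma idx_inj {A : Matrix V V ℂ} (hA : A.IsHermitian) : Function.Injective (idx hA) :=
  (Equiv.injective _).comp (Equiv.injective _)

noncomputable def beta {A : Matrix V V ℂ} (hA : A.IsHermitian)
    (i : Fin (Fintype.card V)) : V → ℂ :=
  ⇑(hA.eigenvectorBasis (idx hA i))

lemma beta_mulVec {A : Matrix V V ℂ} (hA : A.IsHermitian) (i : Fin (Fintype.card V)) :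
    A *ᵥ beta hA i = (mu hA i : ℂ) • beta hA i := by
  have h := hA.mulVec_eigenvectorBasis (idx hA i)
  have hmu : mu hA i = hA.eigenvalues (idx hA i) := rfl
  rw [beta, h, hmu]
  funext v
  simp only [Pi.smul_apply, Complex.real_smul, smul_eq_mul]

lemma beta_ortho {A : Matrix V V ℂ} (hA : A.IsHermitian) (i j : Fin (Fintype.card V)) :
    dotProduct (star (beta hA i)) (beta hA j) = if i = j then (1:ℂ) else 0 := by
  have horth := hA.eigenvectorBasis.orthonormal
  rw [orthonormal_iff_ite] at horth
  have h := horth (idx hA i) (idx hA j)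
  rw [EuclideanSpace.inner_eq_star_dotProduct] at h
  have hiff : (idx hA i = idx hA j) ↔ (i = j) := (idx_inj hA).eq_iff
  have h2 : (if idx hA i = idx hA j then (1:ℂ) else 0) = if i = j then 1 else 0 := by
    simp [hiff]
  rw [← h2, ← h, dotProduct_comm]
  rfl

lemma dot_sums {m : ℕ} {A : Matrix V V ℂ} (hA : A.IsHermitian)
    (g : Fin m → Fin (Fintype.card V)) (hg : Function.Injective g) (c d : Fin m → ℂ) :
    dotProduct (star (∑ i, c i • beta hA (g i))) (∑ j, d j • beta hA (g j))
      = ∑ i, (starRingEnd ℂ) (c i) * d i := by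
  have key : ∀ i j, dotProduct (star (beta hA (g i))) (beta hA (g j))
      = if i = j then (1:ℂ) else 0 := by
    intro i j
    rw [beta_ortho hA]
    simp [hg.eq_iff]
  calc dotProduct (star (∑ i, c i • beta hA (g i))) (∑ j, d j • beta hA (g j))
      = ∑ i, ∑ j, ((starRingEnd ℂ) (c i) * d j)
          * dotProduct (star (beta hA (g i))) (beta hA (g j)) := by
        simp only [dotProduct, Pi.star_apply, Finset.sum_apply, Pi.smul_apply,
          smul_eq_mul, RCLike.star_def, map_sum, _root_.map_mul, Finset.sum_mul_sum]
        rw [Finset.sum_comm]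
        refine Finset.sum_congr rfl fun i _ => ?_
        rw [Finset.sum_comm]
        refine Finset.sum_congr rfl fun j _ => ?_
        simp only [dotProduct, Pi.star_apply, RCLike.star_def, Finset.mul_sum]
        refine Finset.sum_congr rfl fun v _ => ?_
        ring
    _ = ∑ i, (starRingEnd ℂ) (c i) * d i := by
        refine Finset.sum_congr rfl fun i _ => ?_
        rw [Finset.sum_eq_single i]
        · rw [key, if_pos rfl, mul_one]
        · intro j _ hj; rw [key, if_neg (Ne.symm hj), mul_zero]
        · intro hi; exact absurd (Finset.mem_univ i) hi

lemma li_beta {m : ℕ} {A : Matrix V V ℂ} (hA : A.IsHermitian)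
    (g : Fin m → Fin (Fintype.card V)) (hg : Function.Injective g) :
    LinearIndependent ℂ (fun i => beta hA (g i)) := by
  rw [Fintype.linearIndependent_iff]
  intro c hc j
  have h := dot_sums hA g hg c c
  rw [hc] at h
  simp only [star_zero, zero_dotProduct] at h
  have h3 : ((∑ i, Complex.normSq (c i) : ℝ) : ℂ) = 0 := by
    rw [Complex.ofReal_sum]
    have heq : ∑ i, ((Complex.normSq (c i) : ℂ)) = ∑ i, (starRingEnd ℂ) (c i) * c i :=
      Finset.sum_congr rfl fun i _ => Complex.normSq_eq_conj_mul_self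
    rw [heq, ← h]
  have h4 : ∑ i, Complex.normSq (c i) = 0 := by exact_mod_cast h3
  have h5 := (Finset.sum_eq_zero_iff_of_nonneg
    (fun i _ => Complex.normSq_nonneg (c i))).mp h4 j (Finset.mem_univ j)
  exact Complex.normSq_eq_zero.mp h5

lemma rep_facts {m : ℕ} {A : Matrix V V ℂ} (hA : A.IsHermitian)
    (g : Fin m → Fin (Fintype.card V)) (hg : Function.Injective g) (c : Fin m → ℂ) :
    qf A (∑ i, c i • beta hA (g i)) = ∑ i, mu hA (g i) * Complex.normSq (c i)
      ∧ nsq (∑ i, c i • beta hA (g i)) = ∑ i, Complex.normSq (c i) := by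
  set x := ∑ i, c i • beta hA (g i) with hx
  have hmul : A *ᵥ x = ∑ j, ((mu hA (g j) : ℂ) * c j) • beta hA (g j) := by
    have h1 : A *ᵥ x = ∑ j, c j • (A *ᵥ beta hA (g j)) := by
      rw [hx]
      calc A *ᵥ (∑ i, c i • beta hA (g i))
          = A.mulVecLin (∑ i, c i • beta hA (g i)) := rfl
        _ = ∑ i, c i • A.mulVecLin (beta hA (g i)) := by
            rw [map_sum]
            exact Finset.sum_congr rfl fun i _ => by rw [_root_.map_smul]
        _ = ∑ i, c i • (A *ᵥ beta hA (g i)) := rfl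
    rw [h1]
    refine Finset.sum_congr rfl fun j _ => ?_
    rw [beta_mulVec hA, smul_smul, mul_comm]
  have hqc : dotProduct (star x) (A *ᵥ x)
      = ∑ i, ((mu hA (g i) * Complex.normSq (c i) : ℝ) : ℂ) := by
    rw [hmul, hx, dot_sums hA g hg]
    refine Finset.sum_congr rfl fun i _ => ?_
    push_cast
    rw [Complex.normSq_eq_conj_mul_self]
    ring
  have hnc : dotProduct (star x) x = ∑ i, ((Complex.normSq (c i) : ℝ) : ℂ) := by
    have := dot_sums hA g hg c c
    rw [← hx] at this
    rw [this]
    refine Finset.sum_congr rfl fun i _ => ?_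
    rw [← Complex.normSq_eq_conj_mul_self]
  constructor
  · rw [qf, hqc, ← Complex.ofReal_sum, Complex.ofReal_re]
  · have := star_dot_self x
    rw [hnc, ← Complex.ofReal_sum] at this
    exact_mod_cast this.symm

lemma cf_span {A : Matrix V V ℂ} (hA : A.IsHermitian) (k : ℕ) (hk : k < Fintype.card V) :
    ∃ S : Submodule ℂ (V → ℂ), Module.finrank ℂ S = k + 1 ∧
      ∀ x ∈ S, qf A x ≤ mu hA ⟨k, hk⟩ * nsq x := by
  set g : Fin (k + 1) → Fin (Fintype.card V) :=
    fun i => ⟨i.1, lt_of_le_of_lt (Nat.lt_succ_iff.mp i.2) hk⟩ with hgdef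
  have hg : Function.Injective g := by
    intro a b hab
    have h' : (g a).1 = (g b).1 := congrArg Fin.val hab
    simp only [hgdef] at h'
    exact Fin.ext h'
  refine ⟨Submodule.span ℂ (Set.range fun i => beta hA (g i)), ?_, ?_⟩
  · rw [finrank_span_eq_card (li_beta hA g hg)]
    simp
  · intro x hx
    obtain ⟨c, hc⟩ := (Submodule.mem_span_range_iff_exists_fun ℂ).mp hx
    obtain ⟨h1, h2⟩ := rep_facts hA g hg c
    rw [hc] at h1 h2
    rw [h1, h2, Finset.mul_sum]
    refine Finset.sum_le_sum fun i _ => ?_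
    refine mul_le_mul_of_nonneg_right ?_ (Complex.normSq_nonneg _)
    exact mu_mono hA (by exact Nat.lt_succ_iff.mp i.2)

lemma cf_upper {A : Matrix V V ℂ} (hA : A.IsHermitian) (k : ℕ) (hk : k < Fintype.card V)
    (c : ℝ) (S : Submodule ℂ (V → ℂ)) (hdim : k + 1 ≤ Module.finrank ℂ S)
    (hq : ∀ x ∈ S, qf A x ≤ c * nsq x) : mu hA ⟨k, hk⟩ ≤ c := by
  set n := Fintype.card V with hn
  set g : Fin (n - k) → Fin n := fun i => ⟨k + i.1, by omega⟩ with hgdef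
  have hg : Function.Injective g := by
    intro a b hab
    have h' : (g a).1 = (g b).1 := congrArg Fin.val hab
    simp only [hgdef] at h'
    exact Fin.ext (by omega)
  set T := Submodule.span ℂ (Set.range fun i => beta hA (g i)) with hT
  have hTrk : Module.finrank ℂ T = n - k := by
    rw [hT, finrank_span_eq_card (li_beta hA g hg)]
    simp
  have hVrk : Module.finrank ℂ (V → ℂ) = n := by
    simp [hn]
  have hsum := Submodule.finrank_sup_add_finrank_inf_eq S T
  have hle : Module.finrank ℂ ↥(S ⊔ T) ≤ n := hVrk ▸ Submodule.finrank_le _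
  have hpos : 1 ≤ Module.finrank ℂ ↥(S ⊓ T) := by omega
  have hne : S ⊓ T ≠ ⊥ := by
    intro h
    rw [h] at hpos
    simp at hpos
  obtain ⟨x, hxST, hx0⟩ := Submodule.ne_bot_iff _ |>.mp hne
  obtain ⟨c', hc'⟩ := (Submodule.mem_span_range_iff_exists_fun ℂ).mp hxST.2
  obtain ⟨h1, h2⟩ := rep_facts hA g hg c'
  rw [hc'] at h1 h2
  have hlow : mu hA ⟨k, hk⟩ * nsq x ≤ qf A x := by
    rw [h1, h2, Finset.mul_sum]
    refine Finset.sum_le_sum fun i _ => ?_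
    refine mul_le_mul_of_nonneg_right ?_ (Complex.normSq_nonneg _)
    exact mu_mono hA (by simp [hgdef])
  have hup : qf A x ≤ c * nsq x := hq x hxST.1
  have hp : 0 < nsq x := nsq_pos hx0
  nlinarith [hlow, hup, hp]

noncomputable def aw (G : SimpleGraph V) (v u : V) : ℂ := if G.Adj v u then 1 else 0

lemma aw_symm (G : SimpleGraph V) (v u : V) : aw G v u = aw G u v := by
  simp [aw, SimpleGraph.adj_comm]

lemma conj_aw (G : SimpleGraph V) (v u : V) : (starRingEnd ℂ) (aw G v u) = aw G v u := by
  by_cases h : G.Adj v u <;> simp [aw, h]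

lemma conj_expI (θ : ℝ) :
    (starRingEnd ℂ) (Complex.exp (Complex.I * (θ : ℝ))) = Complex.exp (Complex.I * ((-θ : ℝ) : ℝ)) := by
  rw [← Complex.exp_conj]
  congr 1
  simp only [_root_.map_mul, Complex.conj_I, Complex.conj_ofReal]
  push_cast
  ring

lemma expI_mul_conj (θ : ℝ) :
    Complex.exp (Complex.I * (θ : ℝ)) * (starRingEnd ℂ) (Complex.exp (Complex.I * (θ : ℝ))) = 1 := by
  rw [conj_expI, ← Complex.exp_add]
  rw [show Complex.I * (θ : ℝ) + Complex.I * ((-θ : ℝ) : ℝ) = 0 by push_cast; ring]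
  exact Complex.exp_zero

lemma combLap_apply (G : SimpleGraph V) (α : V → V → ℝ) (v u : V) :
    combLap G α v u = (if v = u then ∑ u', aw G v u' else 0)
      - aw G v u * Complex.exp (Complex.I * (α v u : ℝ)) := by
  simp only [combLap, magLap, div_one, aw]
  congr 1
  · split
    · rw [Complex.ofReal_sum]
      refine Finset.sum_congr rfl fun u' _ => ?_
      split <;> simp
    · rfl
  · congr 1
    split <;> simp

lemma combLap_mulVec (G : SimpleGraph V) (α : V → V → ℝ) (x : V → ℂ) (v : V) :
    (combLap G α *ᵥ x) v = (∑ u, aw G v u) * x v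
      - ∑ u, aw G v u * Complex.exp (Complex.I * (α v u : ℝ)) * x u := by
  simp only [Matrix.mulVec, dotProduct, combLap_apply, sub_mul,
    Finset.sum_sub_distrib, ite_mul, zero_mul]
  congr 1
  rw [Finset.sum_ite_eq]
  simp

lemma combLap_isHermitian (G : SimpleGraph V) (α : V → V → ℝ)
    (hα : ∀ v u, α v u = - α u v) : (combLap G α).IsHermitian := by
  refine Matrix.IsHermitian.ext fun u v => ?_
  rw [RCLike.star_def, combLap_apply, combLap_apply, map_sub, _root_.map_mul, conj_aw, conj_expI]
  congr 1
  · by_cases h : v = u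
    · subst h
      simp only [if_true, map_sum, conj_aw]
    · rw [if_neg h, if_neg (fun hh => h hh.symm), map_zero]
  · rw [aw_symm]
    congr 2
    rw [hα u v]

lemma quad (G : SimpleGraph V) (α : V → V → ℝ) (hα : ∀ v u, α v u = - α u v) (x : V → ℂ) :
    2 * dotProduct (star x) (combLap G α *ᵥ x)
      = ∑ v, ∑ u, (if G.Adj v u then
          ((Complex.normSq (x v - Complex.exp (Complex.I * (α v u : ℝ)) * x u) : ℝ) : ℂ)
        else 0) := by
  classical
  set cj := (starRingEnd ℂ)
  have hlhs : dotProduct (star x) (combLap G α *ᵥ x)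
      = (∑ v, ∑ u, aw G v u * (cj (x v) * x v))
        - ∑ v, ∑ u, aw G v u * Complex.exp (Complex.I * (α v u : ℝ)) * (cj (x v) * x u) := by
    rw [dotProduct, ← Finset.sum_sub_distrib]
    refine Finset.sum_congr rfl fun v _ => ?_
    rw [Pi.star_apply, RCLike.star_def, combLap_mulVec, mul_sub]
    congr 1
    · rw [Finset.sum_mul, Finset.mul_sum]
      refine Finset.sum_congr rfl fun u _ => ?_
      ring
    · rw [Finset.mul_sum]
      refine Finset.sum_congr rfl fun u _ => ?_
      ring
  have hrhs : ∀ v u, (if G.Adj v u then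
          ((Complex.normSq (x v - Complex.exp (Complex.I * (α v u : ℝ)) * x u) : ℝ) : ℂ)
        else 0)
      = aw G v u * (cj (x v) * x v) + aw G v u * (cj (x u) * x u)
        - aw G v u * Complex.exp (Complex.I * ((- α v u : ℝ) : ℝ)) * (x v * cj (x u))
        - aw G v u * Complex.exp (Complex.I * (α v u : ℝ)) * (cj (x v) * x u) := by
    intro v u
    by_cases h : G.Adj v u
    · rw [if_pos h]
      have haw : aw G v u = 1 := by simp [aw, h]
      rw [haw]
      simp only [one_mul]
      rw [← Complex.mul_conj]
      simp only [map_sub, _root_.map_mul, cj]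
      rw [show (starRingEnd ℂ) (Complex.exp (Complex.I * (α v u : ℝ)))
          = Complex.exp (Complex.I * ((- α v u : ℝ) : ℝ)) from conj_expI _]
      have hE := expI_mul_conj (α v u)
      rw [conj_expI] at hE
      linear_combination (x u * (starRingEnd ℂ) (x u)) * hE
    · rw [if_neg h]
      have haw : aw G v u = 0 := by simp [aw, h]
      rw [haw]
      ring
  have hswap1 : ∑ v, ∑ u, aw G v u * (cj (x u) * x u)
      = ∑ v, ∑ u, aw G v u * (cj (x v) * x v) := by
    rw [Finset.sum_comm]
    refine Finset.sum_congr rfl fun v _ => Finset.sum_congr rfl fun u _ => ?_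
    rw [aw_symm]
  have hswap2 : ∑ v, ∑ u, aw G v u * Complex.exp (Complex.I * ((- α v u : ℝ) : ℝ)) * (x v * cj (x u))
      = ∑ v, ∑ u, aw G v u * Complex.exp (Complex.I * (α v u : ℝ)) * (cj (x v) * x u) := by
    rw [Finset.sum_comm]
    refine Finset.sum_congr rfl fun v _ => Finset.sum_congr rfl fun u _ => ?_
    rw [aw_symm G u v, show ((- α u v : ℝ) : ℝ) = α v u by rw [hα v u], mul_comm (x u) (cj (x v))]
  calc 2 * dotProduct (star x) (combLap G α *ᵥ x)
      = 2 * ((∑ v, ∑ u, aw G v u * (cj (x v) * x v))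
        - ∑ v, ∑ u, aw G v u * Complex.exp (Complex.I * (α v u : ℝ)) * (cj (x v) * x u)) := by
        rw [hlhs]
    _ = ∑ v, ∑ u, (aw G v u * (cj (x v) * x v) + aw G v u * (cj (x u) * x u)
        - aw G v u * Complex.exp (Complex.I * ((- α v u : ℝ) : ℝ)) * (x v * cj (x u))
        - aw G v u * Complex.exp (Complex.I * (α v u : ℝ)) * (cj (x v) * x u)) := by
        simp only [Finset.sum_sub_distrib, Finset.sum_add_distrib, hswap1, hswap2]
        ring
    _ = ∑ v, ∑ u, (if G.Adj v u then
          ((Complex.normSq (x v - Complex.exp (Complex.I * (α v u : ℝ)) * x u) : ℝ) : ℂ)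
        else 0) := by
        exact Finset.sum_congr rfl fun v _ => Finset.sum_congr rfl fun u _ => (hrhs v u).symm

lemma qf_nonneg (G : SimpleGraph V) (α : V → V → ℝ) (hα : ∀ v u, α v u = - α u v) (x : V → ℂ) :
    0 ≤ qf (combLap G α) x := by
  have h := quad G α hα x
  have h2 : (2 : ℝ) * qf (combLap G α) x
      = ∑ v, ∑ u, (if G.Adj v u then
          Complex.normSq (x v - Complex.exp (Complex.I * (α v u : ℝ)) * x u) else 0) := by
    have := congrArg Complex.re h
    simpa [qf, Complex.re_sum, apply_ite Complex.re] using this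
  have h3 : 0 ≤ (2 : ℝ) * qf (combLap G α) x := by
    rw [h2]
    refine Finset.sum_nonneg fun v _ => Finset.sum_nonneg fun u _ => ?_
    split
    · exact Complex.normSq_nonneg _
    · exact le_refl 0
  linarith

lemma mu_nonneg (G : SimpleGraph V) (α : V → V → ℝ) (hα : ∀ v u, α v u = - α u v)
    (i : Fin (Fintype.card V)) : 0 ≤ mu (combLap_isHermitian G α hα) i := by
  set hA := combLap_isHermitian G α hα
  have h : mu hA i = qf (combLap G α) (beta hA i) := by
    rw [qf]
    have := hA.eigenvalues_eq (idx hA i)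
    exact this
  rw [h]
  exact qf_nonneg G α hα _

lemma expI_neg_mul (θ : ℝ) :
    Complex.exp (Complex.I * (θ : ℝ)) * Complex.exp (Complex.I * ((-θ : ℝ) : ℝ)) = 1 := by
  rw [← Complex.exp_add, show Complex.I * (θ : ℝ) + Complex.I * ((-θ : ℝ) : ℝ) = 0 by
    push_cast; ring]
  exact Complex.exp_zero

section Delete

variable (v₀ : V)

lemma split_sum (F : V → ℂ) : ∑ v, F v = F v₀ + ∑ v : {v : V | v ≠ v₀}, F ↑v := by
  rw [Finset.sum_set_coe (s := {v : V | v ≠ v₀})]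
  have h : ({v : V | v ≠ v₀}).toFinset = Finset.univ.erase v₀ := by
    ext x; simp
  rw [h, Finset.add_sum_erase _ F (Finset.mem_univ v₀)]

noncomputable def extL (φ : (↥{v : V | v ≠ v₀} → ℂ) →ₗ[ℂ] ℂ) :
    (↥{v : V | v ≠ v₀} → ℂ) →ₗ[ℂ] (V → ℂ) where
  toFun ψ v := if h : v = v₀ then φ ψ else ψ ⟨v, h⟩
  map_add' ψ χ := by
    funext v
    by_cases h : v = v₀ <;> simp [h]
  map_smul' c ψ := by
    funext v
    by_cases h : v = v₀ <;> simp [h]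

lemma extL_apply_ne (φ : (↥{v : V | v ≠ v₀} → ℂ) →ₗ[ℂ] ℂ) (ψ : ↥{v : V | v ≠ v₀} → ℂ)
    (v : ↥{v : V | v ≠ v₀}) : extL v₀ φ ψ ↑v = ψ v := by
  have h : (↑v : V) ≠ v₀ := v.2
  simp only [extL, LinearMap.coe_mk, AddHom.coe_mk]
  rw [dif_neg h]

lemma extL_apply_v₀ (φ : (↥{v : V | v ≠ v₀} → ℂ) →ₗ[ℂ] ℂ) (ψ : ↥{v : V | v ≠ v₀} → ℂ) :
    extL v₀ φ ψ v₀ = φ ψ := by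
  simp [extL]

lemma extL_inj (φ : (↥{v : V | v ≠ v₀} → ℂ) →ₗ[ℂ] ℂ) : Function.Injective (extL v₀ φ) := by
  intro ψ χ h
  funext v
  have := congrFun h ↑v
  rwa [extL_apply_ne, extL_apply_ne] at this

lemma nsq_extL (φ : (↥{v : V | v ≠ v₀} → ℂ) →ₗ[ℂ] ℂ) (ψ : ↥{v : V | v ≠ v₀} → ℂ) :
    nsq (extL v₀ φ ψ) = Complex.normSq (φ ψ) + nsq ψ := by
  have h := split_sum v₀ (fun v => ((Complex.normSq (extL v₀ φ ψ v) : ℝ) : ℂ))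
  have h' : ∀ F : V → ℝ, ∑ v, ((F v : ℝ) : ℂ) = ((∑ v, F v : ℝ) : ℂ) := by
    intro F; push_cast; rfl
  rw [nsq]
  have h2 : ∑ v, Complex.normSq (extL v₀ φ ψ v)
      = Complex.normSq (extL v₀ φ ψ v₀) + ∑ v : {v : V | v ≠ v₀}, Complex.normSq (extL v₀ φ ψ ↑v) := by
    exact_mod_cast h
  rw [h2, extL_apply_v₀, nsq]
  congr 1
  exact Finset.sum_congr rfl fun v _ => by rw [extL_apply_ne]

lemma quad_split (G : SimpleGraph V) (α : V → V → ℝ) (hα : ∀ v u, α v u = - α u v)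
    (φ : (↥{v : V | v ≠ v₀} → ℂ) →ₗ[ℂ] ℂ) (ψ : ↥{v : V | v ≠ v₀} → ℂ) :
    2 * dotProduct (star (extL v₀ φ ψ)) (combLap G α *ᵥ (extL v₀ φ ψ))
      = 2 * dotProduct (star ψ)
          (combLap (G.induce {v : V | v ≠ v₀}) (fun a b => α a.1 b.1) *ᵥ ψ)
        + (∑ u : {v : V | v ≠ v₀}, if G.Adj v₀ ↑u then
            ((Complex.normSq (φ ψ - Complex.exp (Complex.I * (α v₀ ↑u : ℝ)) * ψ u) : ℝ) : ℂ) else 0)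
        + (∑ v : {v : V | v ≠ v₀}, if G.Adj ↑v v₀ then
            ((Complex.normSq (ψ v - Complex.exp (Complex.I * (α ↑v v₀ : ℝ)) * φ ψ) : ℝ) : ℂ) else 0) := by
  set x := extL v₀ φ ψ with hx
  set T : V → V → ℂ := fun v u => if G.Adj v u then
      ((Complex.normSq (x v - Complex.exp (Complex.I * (α v u : ℝ)) * x u) : ℝ) : ℂ) else 0 with hT
  have hquad := quad G α hα x
  have hsplit : ∑ v, ∑ u, T v u
      = (∑ u : {v : V | v ≠ v₀}, T v₀ ↑u) + (∑ v : {v : V | v ≠ v₀}, T ↑v v₀)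
        + ∑ v : {v : V | v ≠ v₀}, ∑ u : {v : V | v ≠ v₀}, T ↑v ↑u := by
    rw [split_sum v₀ (fun v => ∑ u, T v u), split_sum v₀ (T v₀)]
    have hdiag : T v₀ v₀ = 0 := by simp [hT]
    rw [hdiag, zero_add]
    have hinner : ∀ v : ↥{v : V | v ≠ v₀}, ∑ u, T ↑v u
        = T ↑v v₀ + ∑ u : {v : V | v ≠ v₀}, T ↑v ↑u := by
      intro v; exact split_sum v₀ (T ↑v)
    rw [Finset.sum_congr rfl (fun v _ => hinner v), Finset.sum_add_distrib]
    ring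
  have hquad' := quad (G.induce {v : V | v ≠ v₀}) (fun a b => α a.1 b.1)
    (fun a b => hα a.1 b.1) ψ
  have hinner_eq : ∀ v u : ↥{v : V | v ≠ v₀}, T ↑v ↑u
      = (if (G.induce {v : V | v ≠ v₀}).Adj v u then
          ((Complex.normSq (ψ v - Complex.exp (Complex.I * (α ↑v ↑u : ℝ)) * ψ u) : ℝ) : ℂ) else 0) := by
    intro v u
    have hadj : (G.induce {v : V | v ≠ v₀}).Adj v u ↔ G.Adj ↑v ↑u := by
      simp [SimpleGraph.comap_adj]
    simp only [hT, hadj]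
    congr 1
    simp only [hx, extL_apply_ne]
  have hT1 : ∀ u : ↥{v : V | v ≠ v₀}, T v₀ ↑u
      = if G.Adj v₀ ↑u then
          ((Complex.normSq (φ ψ - Complex.exp (Complex.I * (α v₀ ↑u : ℝ)) * ψ u) : ℝ) : ℂ) else 0 := by
    intro u
    simp only [hT]
    congr 1
    simp only [hx, extL_apply_v₀, extL_apply_ne]
  have hT2 : ∀ v : ↥{v : V | v ≠ v₀}, T ↑v v₀
      = if G.Adj ↑v v₀ then
          ((Complex.normSq (ψ v - Complex.exp (Complex.I * (α ↑v v₀ : ℝ)) * φ ψ) : ℝ) : ℂ) else 0 := by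
    intro v
    simp only [hT]
    congr 1
    simp only [hx, extL_apply_v₀, extL_apply_ne]
  rw [hquad, hsplit,
    Finset.sum_congr rfl fun v _ => Finset.sum_congr rfl fun u _ => hinner_eq v u,
    Finset.sum_congr rfl fun u _ => hT1 u, Finset.sum_congr rfl fun v _ => hT2 v]
  erw [← hquad']
  ring

end Delete

section Delete2

variable (v₀ : V)

lemma re_two_mul (z : ℂ) : (2 * z).re = 2 * z.re := by simp

lemma re_ite_sum (P : ↥{v : V | v ≠ v₀} → Prop) (F : ↥{v : V | v ≠ v₀} → ℝ)
    (hF : ∀ u, 0 ≤ F u) :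
    0 ≤ (∑ u : ↥{v : V | v ≠ v₀}, if P u then ((F u : ℝ) : ℂ) else 0).re := by
  rw [Complex.re_sum]
  refine Finset.sum_nonneg fun u _ => ?_
  by_cases h : P u
  · rw [if_pos h]; exact hF u
  · rw [if_neg h]; exact le_refl 0

lemma qf_ext_le (G : SimpleGraph V) (α : V → V → ℝ) (hα : ∀ v u, α v u = - α u v)
    (ψ : ↥{v : V | v ≠ v₀} → ℂ) :
    qf (combLap (G.induce {v : V | v ≠ v₀}) (fun a b => α a.1 b.1)) ψ
      ≤ qf (combLap G α) (extL v₀ 0 ψ) := by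
  have h := quad_split v₀ G α hα 0 ψ
  have h' := congrArg Complex.re h
  rw [Complex.add_re, Complex.add_re, re_two_mul, re_two_mul] at h'
  have h1 := re_ite_sum v₀ (fun u => G.Adj v₀ ↑u)
    (fun u => Complex.normSq ((0 : (↥{v : V | v ≠ v₀} → ℂ) →ₗ[ℂ] ℂ) ψ
      - Complex.exp (Complex.I * (α v₀ ↑u : ℝ)) * ψ u)) (fun u => Complex.normSq_nonneg _)
  have h2 := re_ite_sum v₀ (fun v => G.Adj ↑v v₀)
    (fun v => Complex.normSq (ψ v - Complex.exp (Complex.I * (α ↑v v₀ : ℝ))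
      * ((0 : (↥{v : V | v ≠ v₀} → ℂ) →ₗ[ℂ] ℂ) ψ))) (fun v => Complex.normSq_nonneg _)
  rw [qf, qf]
  linarith [h', h1, h2]

lemma qf_ext_eq (G : SimpleGraph V) (α : V → V → ℝ) (hα : ∀ v u, α v u = - α u v)
    (φ : (↥{v : V | v ≠ v₀} → ℂ) →ₗ[ℂ] ℂ) (ψ : ↥{v : V | v ≠ v₀} → ℂ)
    (hmatch : ∀ u : ↥{v : V | v ≠ v₀}, G.Adj v₀ ↑u →
      Complex.exp (Complex.I * (α v₀ ↑u : ℝ)) * ψ u = φ ψ) :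
    qf (combLap G α) (extL v₀ φ ψ)
      = qf (combLap (G.induce {v : V | v ≠ v₀}) (fun a b => α a.1 b.1)) ψ := by
  have h := quad_split v₀ G α hα φ ψ
  have hz1 : (∑ u : ↥{v : V | v ≠ v₀}, if G.Adj v₀ ↑u then
      ((Complex.normSq (φ ψ - Complex.exp (Complex.I * (α v₀ ↑u : ℝ)) * ψ u) : ℝ) : ℂ) else 0)
      = 0 := by
    refine Finset.sum_eq_zero fun u _ => ?_
    by_cases hadj : G.Adj v₀ ↑u
    · rw [if_pos hadj, hmatch u hadj]
      simp
    · rw [if_neg hadj]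
  have hz2 : (∑ v : ↥{v : V | v ≠ v₀}, if G.Adj ↑v v₀ then
      ((Complex.normSq (ψ v - Complex.exp (Complex.I * (α ↑v v₀ : ℝ)) * φ ψ) : ℝ) : ℂ) else 0)
      = 0 := by
    refine Finset.sum_eq_zero fun v _ => ?_
    by_cases hadj : G.Adj ↑v v₀
    · rw [if_pos hadj]
      have hadj' : G.Adj v₀ ↑v := hadj.symm
      rw [← hmatch v hadj']
      have hcancel : Complex.exp (Complex.I * (α ↑v v₀ : ℝ))
          * (Complex.exp (Complex.I * (α v₀ ↑v : ℝ)) * ψ v) = ψ v := by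
        rw [← mul_assoc]
        have : (α v₀ (↑v : V) : ℝ) = ((- α (↑v : V) v₀ : ℝ) : ℝ) := by
          rw [hα (↑v : V) v₀]; push_cast; ring
        rw [show ((α v₀ (↑v : V) : ℝ) : ℂ) = ((- α (↑v : V) v₀ : ℝ) : ℂ) by exact_mod_cast congrArg Complex.ofReal this]
        rw [expI_neg_mul, one_mul]
      rw [hcancel]
      simp
    · rw [if_neg hadj]
  rw [hz1, hz2, add_zero, add_zero] at h
  have h' := congrArg Complex.re h
  rw [re_two_mul, re_two_mul] at h'
  rw [qf, qf]
  linarith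

end Delete2

section Dim

variable {M : Type} [AddCommGroup M] [Module ℂ M] [FiniteDimensional ℂ M]

lemma finrank_inf_ker (p : Submodule ℂ M) (f : M →ₗ[ℂ] ℂ) :
    Module.finrank ℂ ↥p ≤ Module.finrank ℂ ↥(p ⊓ LinearMap.ker f) + 1 := by
  have h1 := LinearMap.finrank_range_add_finrank_ker (f.comp p.subtype)
  have h2 : Module.finrank ℂ ↥(LinearMap.range (f.comp p.subtype)) ≤ 1 := by
    have := Submodule.finrank_le (LinearMap.range (f.comp p.subtype))
    simpa using this
  have h3 : Module.finrank ℂ ↥(LinearMap.ker (f.comp p.subtype))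
      = Module.finrank ℂ ↥(p ⊓ LinearMap.ker f) := by
    rw [LinearMap.ker_comp]
    have he : Submodule.comap p.subtype (LinearMap.ker f)
        = Submodule.comap p.subtype (p ⊓ LinearMap.ker f) := by
      rw [Submodule.comap_inf, Submodule.comap_subtype_self, top_inf_eq]
    rw [he]
    exact (Submodule.comapSubtypeEquivOfLe inf_le_left).finrank_eq
  omega

lemma finrank_inf_iInf_ker {ι : Type} [DecidableEq ι] (p : Submodule ℂ M) (s : Finset ι)
    (f : ι → (M →ₗ[ℂ] ℂ)) :
    Module.finrank ℂ ↥p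
      ≤ Module.finrank ℂ ↥(p ⊓ ⨅ u ∈ s, LinearMap.ker (f u)) + s.card := by
  classical
  induction s using Finset.induction with
  | empty =>
    have : p ⊓ ⨅ u ∈ (∅ : Finset ι), LinearMap.ker (f u) = p := by simp
    rw [this]
    simp
  | @insert a s ha ih =>
    have heq : p ⊓ ⨅ u ∈ insert a s, LinearMap.ker (f u)
        = (p ⊓ ⨅ u ∈ s, LinearMap.ker (f u)) ⊓ LinearMap.ker (f a) := by
      rw [Finset.iInf_insert, inf_comm (LinearMap.ker (f a)), ← inf_assoc]
    have hd := finrank_inf_ker (p ⊓ ⨅ u ∈ s, LinearMap.ker (f u)) (f a)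
    rw [heq, Finset.card_insert_of_notMem ha]
    omega

end Dim

noncomputable def evc (v₀ u : V) : (↥{v : V | v ≠ v₀} → ℂ) →ₗ[ℂ] ℂ :=
  if h : u ≠ v₀ then LinearMap.proj (⟨u, h⟩ : ↥{v : V | v ≠ v₀}) else 0

lemma evc_apply (v₀ u : V) (h : u ≠ v₀) (ψ : ↥{v : V | v ≠ v₀} → ℂ) :
    evc v₀ u ψ = ψ ⟨u, h⟩ := by
  rw [evc, dif_pos h]
  rfl

end S16

/-- deleting a vertex `v₀` of degree `r ≥ 1` (passing to the
induced subgraph on `V ∖ {v₀}`) with combinatorial weights: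
`λ_k ≤ λ'_{k+r−1}` for `1 ≤ k ≤ n − r`, and `λ'_k ≤ λ_{k+1}` for
`1 ≤ k ≤ n − 1`. -/
theorem stmt16 {V : Type} [Fintype V] [DecidableEq V] [Nonempty V]
    (hn : 2 ≤ Fintype.card V)
    (G : SimpleGraph V) (v₀ : V) (hr : 1 ≤ G.degree v₀)
    (α : V → V → ℝ) (hα : ∀ v u, α v u = - α u v) :
    (∀ k : ℕ, 1 ≤ k → k ≤ Fintype.card V - G.degree v₀ →
      lamk (combLap G α) (k - 1)
        ≤ lamk (combLap (G.induce {v : V | v ≠ v₀}) (fun a b => α a.1 b.1))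
            ((k - 1) + (G.degree v₀ - 1)))
    ∧ (∀ k : ℕ, 1 ≤ k → k ≤ Fintype.card V - 1 →
      lamk (combLap (G.induce {v : V | v ≠ v₀}) (fun a b => α a.1 b.1)) (k - 1)
        ≤ lamk (combLap G α) k) := by
  classical
  have hα' : ∀ a b : ↥{v : V | v ≠ v₀}, α a.1 b.1 = - α b.1 a.1 := fun a b => hα a.1 b.1
  have hA : (combLap G α).IsHermitian := S16.combLap_isHermitian G α hα
  have hA' : (combLap (G.induce {v : V | v ≠ v₀}) (fun a b => α a.1 b.1)).IsHermitian :=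
    S16.combLap_isHermitian _ _ hα'
  have hcard : Fintype.card ↥{v : V | v ≠ v₀} = Fintype.card V - 1 := by
    have h1 : ({v : V | v ≠ v₀}).toFinset = Finset.univ.erase v₀ := by
      ext x; simp
    have h2 := Set.toFinset_card ({v : V | v ≠ v₀})
    rw [h1, Finset.card_erase_of_mem (Finset.mem_univ v₀), Finset.card_univ] at h2
    exact h2.symm
  set N := Finset.univ.filter (fun u => G.Adj v₀ u) with hN
  have hNdeg : G.neighborFinset v₀ = N := by
    ext u; simp [SimpleGraph.mem_neighborFinset, hN]
  have hNcard : N.card = G.degree v₀ := by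
    rw [← hNdeg]
    exact SimpleGraph.card_neighborFinset_eq_degree G v₀
  constructor
  · -- claim 1 : λ_k ≤ λ'_{k+r-1}
    intro k hk1 hk2
    have hjr' : (k - 1) + (G.degree v₀ - 1) < Fintype.card ↥{v : V | v ≠ v₀} := by
      rw [hcard]; omega
    have hjn : k - 1 < Fintype.card V := by omega
    rw [S16.lamk_eq hA _ hjn, S16.lamk_eq hA' _ hjr']
    obtain ⟨S0, hS0rank, hS0q⟩ := S16.cf_span hA' ((k - 1) + (G.degree v₀ - 1)) hjr'
    obtain ⟨u₀, hu₀N⟩ := Finset.card_pos.mp (show 0 < N.card by rw [hNcard]; omega)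
    have hu₀adj : G.Adj v₀ u₀ := (Finset.mem_filter.mp hu₀N).2
    have hu₀ne : u₀ ≠ v₀ := hu₀adj.ne'
    set φ : (↥{v : V | v ≠ v₀} → ℂ) →ₗ[ℂ] ℂ :=
      Complex.exp (Complex.I * (α v₀ u₀ : ℝ)) • S16.evc v₀ u₀ with hφ
    set L : V → ((↥{v : V | v ≠ v₀} → ℂ) →ₗ[ℂ] ℂ) :=
      fun u => Complex.exp (Complex.I * (α v₀ u : ℝ)) • S16.evc v₀ u - φ with hL
    set W := S0 ⊓ ⨅ u ∈ N.erase u₀, LinearMap.ker (L u) with hW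
    have hWrank : (k - 1) + 1 ≤ Module.finrank ℂ ↥W := by
      have h := S16.finrank_inf_iInf_ker S0 (N.erase u₀) L
      rw [Finset.card_erase_of_mem hu₀N, hNcard, ← hW, hS0rank] at h
      omega
    have hmatch : ∀ ψ, ψ ∈ W → ∀ u : ↥{v : V | v ≠ v₀}, G.Adj v₀ ↑u →
        Complex.exp (Complex.I * (α v₀ ↑u : ℝ)) * ψ u = φ ψ := by
      intro ψ hψ u hadj
      have hune : (↑u : V) ≠ v₀ := u.2
      by_cases hcase : (↑u : V) = u₀
      · have hu : u = ⟨u₀, hu₀ne⟩ := Subtype.ext hcase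
        rw [hu, hφ]
        rw [LinearMap.smul_apply, S16.evc_apply v₀ u₀ hu₀ne, smul_eq_mul]
      · have hmem : (↑u : V) ∈ N.erase u₀ := Finset.mem_erase.mpr
          ⟨hcase, Finset.mem_filter.mpr ⟨Finset.mem_univ _, hadj⟩⟩
        have hker : ψ ∈ LinearMap.ker (L ↑u) := by
          have hsub : (⨅ u ∈ N.erase u₀, LinearMap.ker (L u)) ≤ LinearMap.ker (L ↑u) :=
            le_trans (iInf_le _ (↑u : V)) (iInf_le _ hmem)
          exact hsub hψ.2
        have h4 : L ↑u ψ = 0 := hker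
        rw [hL] at h4
        simp only [LinearMap.sub_apply, LinearMap.smul_apply, smul_eq_mul] at h4
        rw [S16.evc_apply v₀ ↑u hune] at h4
        have h5 := sub_eq_zero.mp h4
        rw [← h5]
    set E := S16.extL v₀ φ with hE
    set S := Submodule.map E W with hS
    have hSrank : (k - 1) + 1 ≤ Module.finrank ℂ ↥S := by
      have h := (Submodule.equivMapOfInjective E (S16.extL_inj v₀ φ) W).finrank_eq
      rw [← hS] at h
      omega
    refine S16.cf_upper hA (k - 1) hjn _ S hSrank ?_
    intro x hx
    obtain ⟨ψ, hψW, rfl⟩ := hx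
    have heq : S16.qf (combLap G α) (E ψ)
        = S16.qf (combLap (G.induce {v : V | v ≠ v₀}) (fun a b => α a.1 b.1)) ψ :=
      S16.qf_ext_eq v₀ G α hα φ ψ (hmatch ψ hψW)
    have hq' := hS0q ψ hψW.1
    have hnsq : S16.nsq ψ ≤ S16.nsq (E ψ) := by
      rw [hE, S16.nsq_extL]
      have := Complex.normSq_nonneg (φ ψ)
      linarith
    have hmu0 : 0 ≤ S16.mu hA' ⟨(k - 1) + (G.degree v₀ - 1), hjr'⟩ :=
      S16.mu_nonneg _ _ hα' _
    calc S16.qf (combLap G α) (E ψ)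
        = S16.qf (combLap (G.induce {v : V | v ≠ v₀}) (fun a b => α a.1 b.1)) ψ := heq
      _ ≤ S16.mu hA' ⟨(k - 1) + (G.degree v₀ - 1), hjr'⟩ * S16.nsq ψ := hq'
      _ ≤ S16.mu hA' ⟨(k - 1) + (G.degree v₀ - 1), hjr'⟩ * S16.nsq (E ψ) :=
          mul_le_mul_of_nonneg_left hnsq hmu0
  · -- claim 2 : λ'_k ≤ λ_{k+1}
    intro k hk1 hk2
    have hkn : k < Fintype.card V := by omega
    have hkn' : k - 1 < Fintype.card ↥{v : V | v ≠ v₀} := by rw [hcard]; omega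
    rw [S16.lamk_eq hA k hkn, S16.lamk_eq hA' _ hkn']
    obtain ⟨S, hSrank, hSq⟩ := S16.cf_span hA k hkn
    set ev : (V → ℂ) →ₗ[ℂ] ℂ := LinearMap.proj v₀ with hev
    set ρ : (V → ℂ) →ₗ[ℂ] (↥{v : V | v ≠ v₀} → ℂ) :=
      LinearMap.funLeft ℂ ℂ Subtype.val with hρ
    set S' := Submodule.map ρ (S ⊓ LinearMap.ker ev) with hS'
    have hrank2 : (k - 1) + 1 ≤ Module.finrank ℂ ↥S' := by
      have hd := S16.finrank_inf_ker S ev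
      have hkerbot : LinearMap.ker (ρ.comp (S ⊓ LinearMap.ker ev).subtype) = ⊥ := by
        rw [LinearMap.ker_eq_bot']
        intro m hm
        have hx0 : (↑m : V → ℂ) v₀ = 0 := m.2.2
        have hme : (↑m : V → ℂ) = 0 := by
          funext v
          by_cases hv : v = v₀
          · rw [hv]; exact hx0
          · exact congrFun hm ⟨v, hv⟩
        exact Subtype.ext hme
      have hcomp : LinearMap.range (ρ.comp (S ⊓ LinearMap.ker ev).subtype) = S' := by
        rw [LinearMap.range_comp, Submodule.range_subtype]
      have hfr := LinearMap.finrank_range_add_finrank_ker (ρ.comp (S ⊓ LinearMap.ker ev).subtype)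
      rw [hcomp, hkerbot, finrank_bot, add_zero] at hfr
      omega
    refine S16.cf_upper hA' (k - 1) hkn' _ S' hrank2 ?_
    intro y hy
    obtain ⟨x, hxmem, rfl⟩ := hy
    have hx0 : x v₀ = 0 := hxmem.2
    have hxe : S16.extL v₀ 0 (ρ x) = x := by
      funext v
      by_cases hv : v = v₀
      · rw [hv, S16.extL_apply_v₀]
        simp [hx0]
      · have h := S16.extL_apply_ne v₀ 0 (ρ x) ⟨v, hv⟩
        rw [h]
        rfl
    have hle := S16.qf_ext_le v₀ G α hα (ρ x)
    rw [hxe] at hle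
    have hq := hSq x hxmem.1
    have hnsq : S16.nsq (ρ x) = S16.nsq x := by
      conv_rhs => rw [← hxe]
      rw [S16.nsq_extL]
      simp
    rw [← hnsq] at hq
    linarith
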